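/- Let d ∈ ℕ, d ≥ 1, ρ a density matrix on ℂ^d, {P(f)}_{f∈Ω} a PVM on a nonempty finite set Ω, and U : ℝ → M_d(ℂ) a family of unitary matrices. Then for every n ∈ ℕ, all times t_1 < … < t_n, and all f⁺, f⁻ ∈ Ω^n, the quantum bi-probability is bounded by the geometric mean of the diagonal probabilities: |Q_{t_n,…,t_1}(f⁺,f⁻)| ≤ sqrt(P_{t_n,…,t_1}(f⁺)) · sqrt(P_{t_n,…,t_1}(f⁻)). -/

import Mathlib

open Matrix
open scoped ComplexOrder

/-- The Heisenberg-picture projection at time `t`: `P_t(f) = U(t)* P(f) U(t)`. -/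
noncomputable def heisenbergProj {d : ℕ} {Ω : Type*}
    (P : Ω → Matrix (Fin d) (Fin d) ℂ) (U : ℝ → Matrix (Fin d) (Fin d) ℂ)
    (t : ℝ) (f : Ω) : Matrix (Fin d) (Fin d) ℂ :=
  (U t)ᴴ * P f * U t

/-- The quantum bi-probability
`Q_{t_n,…,t_1}(f⁺,f⁻) = tr[P_{t_n}(f_n⁺)⋯P_{t_1}(f_1⁺) ρ P_{t_1}(f_1⁻)⋯P_{t_n}(f_n⁻)]`,
where indices `j : Fin n` are ordered so that `j = 0` corresponds to the earliest time `t_1`. -/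
noncomputable def quantumBiProb {d : ℕ} {Ω : Type*}
    (ρ : Matrix (Fin d) (Fin d) ℂ) (P : Ω → Matrix (Fin d) (Fin d) ℂ)
    (U : ℝ → Matrix (Fin d) (Fin d) ℂ) {n : ℕ} (t : Fin n → ℝ)
    (fp fm : Fin n → Ω) : ℂ :=
  Matrix.trace
    ((List.ofFn fun j => heisenbergProj P U (t j) (fp j)).reverse.prod * ρ *
      (List.ofFn fun j => heisenbergProj P U (t j) (fm j)).prod)

noncomputable def matToEuc {d : ℕ} (A : Matrix (Fin d) (Fin d) ℂ) :
    EuclideanSpace ℂ (Fin d × Fin d) := WithLp.toLp 2 (fun p : Fin d × Fin d => A p.1 p.2)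

lemma trace_eq_inner {d : ℕ} (A B : Matrix (Fin d) (Fin d) ℂ) :
    Matrix.trace (Aᴴ * B) = inner ℂ (matToEuc A) (matToEuc B) := by
  simp only [Matrix.trace, Matrix.diag, Matrix.mul_apply, Matrix.conjTranspose_apply,
    PiLp.inner_apply, RCLike.inner_apply, matToEuc, PiLp.toLp_apply, Fintype.sum_prod_type]
  rw [Finset.sum_comm]; exact Finset.sum_congr rfl fun _ _ => Finset.sum_congr rfl fun _ _ => mul_comm _ _

/-- the quantum bi-probability is bounded by the geometric mean of the
corresponding diagonal probabilities:
`|Q(f⁺,f⁻)| ≤ sqrt(P(f⁺)) · sqrt(P(f⁻))` where `P(f) = Q(f,f)` (a nonnegative real). -/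
theorem quantumBiProb_abs_le_geom_mean {d : ℕ} (hd : 1 ≤ d)
    {Ω : Type*} [Fintype Ω] [Nonempty Ω] [DecidableEq Ω]
    (ρ : Matrix (Fin d) (Fin d) ℂ) (hρ : ρ.PosSemidef) (hρtr : ρ.trace = 1)
    (P : Ω → Matrix (Fin d) (Fin d) ℂ)
    (hPsa : ∀ f, (P f).IsHermitian) (hPidem : ∀ f, P f * P f = P f)
    (hPorth : ∀ f f', f ≠ f' → P f * P f' = 0) (hPsum : ∑ f, P f = 1)
    (U : ℝ → Matrix (Fin d) (Fin d) ℂ)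
    (hU : ∀ t, U t ∈ Matrix.unitaryGroup (Fin d) ℂ)
    (n : ℕ) (t : Fin n → ℝ) (ht : StrictMono t) (fp fm : Fin n → Ω) :
    ‖quantumBiProb ρ P U t fp fm‖ ≤
      Real.sqrt (quantumBiProb ρ P U t fp fp).re *
        Real.sqrt (quantumBiProb ρ P U t fm fm).re := by
  classical
  have hherm : ∀ (f : Fin n → Ω),
      ((List.ofFn fun j => heisenbergProj P U (t j) (f j)).reverse.prod)
        = ((List.ofFn fun j => heisenbergProj P U (t j) (f j)).prod)ᴴ := by
    intro f
    rw [Matrix.conjTranspose_list_prod]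
    congr 1
    rw [List.map_ofFn]
    refine congrArg List.reverse (congrArg List.ofFn (funext fun j => ?_))
    show heisenbergProj P U (t j) (f j) = (heisenbergProj P U (t j) (f j))ᴴ
    symm
    simp [heisenbergProj, Matrix.conjTranspose_mul, mul_assoc]
    rw [(hPsa (f j)).eq]
  obtain ⟨S, hSH, hSS⟩ : ∃ S : Matrix (Fin d) (Fin d) ℂ, Sᴴ = S ∧ S * S = ρ := by
    open scoped MatrixOrder in
    exact ⟨CFC.sqrt ρ, (CFC.sqrt_nonneg ρ).posSemidef.isHermitian, CFC.sqrt_mul_sqrt_self ρ hρ.nonneg⟩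
  have key : ∀ f g : Fin n → Ω,
      quantumBiProb ρ P U t f g =
        Matrix.trace ((S * (List.ofFn fun j => heisenbergProj P U (t j) (f j)).prod)ᴴ *
          (S * (List.ofFn fun j => heisenbergProj P U (t j) (g j)).prod)) := by
    intro f g
    rw [quantumBiProb, hherm f]
    simp only [Matrix.conjTranspose_mul, hSH]
    rw [← hSS]
    simp only [mul_assoc]
  rw [key fp fm, key fp fp, key fm fm, trace_eq_inner, trace_eq_inner, trace_eq_inner]
  have h1 : ∀ X : EuclideanSpace ℂ (Fin d × Fin d),
      Real.sqrt (inner (𝕜 := ℂ) X X).re = ‖X‖ := fun X =>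
    (norm_eq_sqrt_re_inner (𝕜 := ℂ) X).symm
  rw [h1, h1]
  exact norm_inner_le_norm _ _
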